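/- The Euler–Lagrange equation implies stationarity of the line-integral functional: let F : ℝ^d → ℝ be continuously differentiable, let r : [0,1] → ℝ^d be twice continuously differentiable with r'(t) ≠ 0 for all t, and set τ(t) = r'(t)/‖r'(t)‖. Suppose r satisfies the Euler–Lagrange equation ∇F(r(t))·‖r'(t)‖ = ⟨∇F(r(t)), r'(t)⟩·τ(t) + F(r(t))·τ'(t) for all t ∈ [0,1]. Then for every continuously differentiable variation δr : [0,1] → ℝ^d with δr(0) = δr(1) = 0, the derivative at ε = 0 of ε ↦ ∫₀¹ F(r(t) + ε·δr(t))·‖r'(t) + ε·δr'(t)‖ dt is zero. -/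

import Mathlib

open Set Filter MeasureTheory
open scoped RealInnerProductSpace

lemma hasDerivAt_norm_comp {E : Type*} [NormedAddCommGroup E] [InnerProductSpace ℝ E]
    {f : ℝ → E} {f' : E} {x : ℝ} (hf : HasDerivAt f f' x) (hx : f x ≠ 0) :
    HasDerivAt (fun t => ‖f t‖) (⟪f x, f'⟫ / ‖f x‖) x := by
  have h1 : HasDerivAt (fun t => ‖f t‖ ^ 2) (2 * ⟪f x, f'⟫) x := hf.norm_sq
  have h2 := h1.sqrt (pow_ne_zero 2 (norm_ne_zero_iff.2 hx))
  simp only [Real.sqrt_sq (norm_nonneg _)] at h2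
  convert h2 using 1
  rw [mul_div_mul_left _ _ (two_ne_zero)]


/-- The Euler–Lagrange equation
`∇F(r)‖r'‖ = ⟨∇F(r), r'⟩ τ + F(r) τ'` (with `τ = r'/‖r'‖`) implies stationarity
of the line-integral functional `E[r] = ∫₀¹ F(r(t))‖r'(t)‖ dt` with respect to
every `C¹` variation vanishing at the endpoints. -/
theorem euler_lagrange_implies_stationary {d : ℕ}
    (F : EuclideanSpace ℝ (Fin d) → ℝ)
    (gradF : EuclideanSpace ℝ (Fin d) → EuclideanSpace ℝ (Fin d))
    (hgrad : ∀ x, HasGradientAt F (gradF x) x)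
    (hgradc : Continuous gradF)
    (r r' r'' : ℝ → EuclideanSpace ℝ (Fin d))
    (hr : ∀ t ∈ Icc (0:ℝ) 1, HasDerivAt r (r' t) t)
    (hr' : ∀ t ∈ Icc (0:ℝ) 1, HasDerivAt r' (r'' t) t)
    (hr''c : ContinuousOn r'' (Icc 0 1))
    (hr'ne : ∀ t ∈ Icc (0:ℝ) 1, r' t ≠ 0)
    (τ' : ℝ → EuclideanSpace ℝ (Fin d))
    (hτ' : ∀ t ∈ Icc (0:ℝ) 1, HasDerivAt (fun u => ‖r' u‖⁻¹ • r' u) (τ' t) t)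
    (hEL : ∀ t ∈ Icc (0:ℝ) 1,
      ‖r' t‖ • gradF (r t) =
        ⟪gradF (r t), r' t⟫ • (‖r' t‖⁻¹ • r' t) + F (r t) • τ' t) :
    ∀ (δr δr' : ℝ → EuclideanSpace ℝ (Fin d)),
      (∀ t ∈ Icc (0:ℝ) 1, HasDerivAt δr (δr' t) t) →
      ContinuousOn δr' (Icc 0 1) →
      δr 0 = 0 → δr 1 = 0 →
      HasDerivAt
        (fun ε : ℝ => ∫ t in (0:ℝ)..1, F (r t + ε • δr t) * ‖r' t + ε • δr' t‖)
        0 0 := by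
  intro δr δr' hδr hδr'c hδr0 hδr1
  have hFc : Continuous F := by
    apply continuous_iff_continuousAt.2
    exact fun x => (hgrad x).hasFDerivAt.differentiableAt.continuousAt
  have hrc : ContinuousOn r (Icc 0 1) :=
    fun t ht => (hr t ht).continuousAt.continuousWithinAt
  have hr'c : ContinuousOn r' (Icc 0 1) :=
    fun t ht => (hr' t ht).continuousAt.continuousWithinAt
  have hδrc : ContinuousOn δr (Icc 0 1) :=
    fun t ht => (hδr t ht).continuousAt.continuousWithinAt
  -- lower bound on ‖r'‖
  obtain ⟨t₀, ht₀, hmin'⟩ := isCompact_Icc.exists_isMinOn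
    (nonempty_Icc.2 zero_le_one) hr'c.norm
  have hmin : ∀ t ∈ Icc (0:ℝ) 1, ‖r' t₀‖ ≤ ‖r' t‖ := fun t ht => hmin' ht
  set m : ℝ := ‖r' t₀‖ with hm
  have hmpos : 0 < m := norm_pos_iff.2 (hr'ne t₀ ht₀)
  -- upper bound on ‖δr'‖
  obtain ⟨C₀, hC₀⟩ := isCompact_Icc.exists_bound_of_continuousOn hδr'c
  set M : ℝ := max C₀ 1 with hM
  have hMpos : 0 < M := lt_of_lt_of_le one_pos (le_max_right _ _)
  set ε₀ : ℝ := m / (2 * M) with hε₀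
  have hε₀pos : 0 < ε₀ := div_pos hmpos (by positivity)
  -- nonvanishing of r' + ε δr' for |ε| ≤ ε₀
  have hne : ∀ ε : ℝ, |ε| ≤ ε₀ → ∀ t ∈ Icc (0:ℝ) 1, r' t + ε • δr' t ≠ 0 := by
    intro ε hε t ht
    have h1 : ‖ε • δr' t‖ ≤ ε₀ * M := by
      rw [norm_smul, Real.norm_eq_abs]
      exact mul_le_mul hε (le_trans (hC₀ t ht) (le_max_left _ _)) (norm_nonneg _) hε₀pos.le
    have h2 : ε₀ * M = m / 2 := by
      rw [hε₀, div_mul_eq_mul_div, div_eq_div_iff (mul_pos two_pos hMpos).ne' two_ne_zero]; ring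
    have h3 : m ≤ ‖r' t‖ := hmin t ht
    intro h0
    have : r' t = -(ε • δr' t) := by
      rw [eq_neg_iff_add_eq_zero]; exact h0
    have : ‖r' t‖ ≤ m / 2 := by rw [this, norm_neg]; linarith [h1, h2.symm.le]
    linarith
  -- the pointwise derivative in ε
  set G' : ℝ → ℝ → ℝ := fun ε t =>
    ⟪gradF (r t + ε • δr t), δr t⟫ * ‖r' t + ε • δr' t‖ +
      F (r t + ε • δr t) * (⟪r' t + ε • δr' t, δr' t⟫ / ‖r' t + ε • δr' t‖) with hG'
  have h_diff : ∀ t ∈ Icc (0:ℝ) 1, ∀ ε : ℝ, |ε| ≤ ε₀ →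
      HasDerivAt (fun s : ℝ => F (r t + s • δr t) * ‖r' t + s • δr' t‖) (G' ε t) ε := by
    intro t ht ε hε
    have ha : HasDerivAt (fun s : ℝ => r t + s • δr t) (δr t) ε := by
      simpa using ((hasDerivAt_id ε).smul_const (δr t)).const_add (r t)
    have hb : HasDerivAt (fun s : ℝ => r' t + s • δr' t) (δr' t) ε := by
      simpa using ((hasDerivAt_id ε).smul_const (δr' t)).const_add (r' t)
    have hFa : HasDerivAt (fun s : ℝ => F (r t + s • δr t))
        ⟪gradF (r t + ε • δr t), δr t⟫ ε := by
      have := (hgrad (r t + ε • δr t)).hasFDerivAt.comp_hasDerivAt ε ha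
      simpa [Function.comp_def] using this
    have hNb : HasDerivAt (fun s : ℝ => ‖r' t + s • δr' t‖)
        (⟪r' t + ε • δr' t, δr' t⟫ / ‖r' t + ε • δr' t‖) ε :=
      hasDerivAt_norm_comp hb (hne ε hε t ht)
    exact hFa.mul hNb
  -- continuity of G' on the compact box
  set K : Set (ℝ × ℝ) := Icc (-ε₀) ε₀ ×ˢ Icc 0 1 with hK
  have hKmem : ∀ p : ℝ × ℝ, p ∈ K → p.2 ∈ Icc (0:ℝ) 1 := fun p hp => hp.2
  have hA : ContinuousOn (fun p : ℝ × ℝ => r p.2 + p.1 • δr p.2) K :=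
    (hrc.comp continuous_snd.continuousOn hKmem).add
      (continuous_fst.continuousOn.smul (hδrc.comp continuous_snd.continuousOn hKmem))
  have hB : ContinuousOn (fun p : ℝ × ℝ => r' p.2 + p.1 • δr' p.2) K :=
    (hr'c.comp continuous_snd.continuousOn hKmem).add
      (continuous_fst.continuousOn.smul (hδr'c.comp continuous_snd.continuousOn hKmem))
  have hBne : ∀ p ∈ K, r' p.2 + p.1 • δr' p.2 ≠ 0 := by
    intro p hp
    exact hne p.1 (abs_le.2 ⟨hp.1.1, hp.1.2⟩) p.2 hp.2
  have hG'c : ContinuousOn (fun p : ℝ × ℝ => G' p.1 p.2) K := by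
    apply ContinuousOn.add
    · exact ((hgradc.comp_continuousOn hA).inner
        (hδrc.comp continuous_snd.continuousOn hKmem)).mul hB.norm
    · exact (hFc.comp_continuousOn hA).mul
        ((hB.inner (hδr'c.comp continuous_snd.continuousOn hKmem)).div hB.norm
          (fun p hp => norm_ne_zero_iff.2 (hBne p hp)))
  obtain ⟨C, hC⟩ := (isCompact_Icc.prod isCompact_Icc).exists_bound_of_continuousOn hG'c
  have hsub : Set.uIoc (0:ℝ) 1 ⊆ Icc 0 1 := by
    rw [uIoc_of_le zero_le_one]; exact Ioc_subset_Icc_self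
  have hIc : ∀ ε : ℝ, ContinuousOn
      (fun t => F (r t + ε • δr t) * ‖r' t + ε • δr' t‖) (Icc 0 1) := by
    intro ε
    exact (hFc.comp_continuousOn (hrc.add (hδrc.const_smul ε))).mul
      ((hr'c.add (hδr'c.const_smul ε)).norm)
  have hG'1c : ∀ ε : ℝ, |ε| ≤ ε₀ → ContinuousOn (fun t => G' ε t) (Icc 0 1) := by
    intro ε hε
    have hBc : ContinuousOn (fun t => r' t + ε • δr' t) (Icc 0 1) :=
      hr'c.add (hδr'c.const_smul ε)
    exact (((hgradc.comp_continuousOn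
        (hrc.add (hδrc.const_smul ε))).inner hδrc).mul hBc.norm).add
      ((hFc.comp_continuousOn (hrc.add (hδrc.const_smul ε))).mul
        ((hBc.inner hδr'c).div hBc.norm
          (fun t ht => norm_ne_zero_iff.2 (hne ε hε t ht))))
  obtain ⟨-, main⟩ := intervalIntegral.hasDerivAt_integral_of_dominated_loc_of_deriv_le
    (F := fun ε t => F (r t + ε • δr t) * ‖r' t + ε • δr' t‖)
    (F' := G') (x₀ := (0:ℝ)) (a := (0:ℝ)) (b := (1:ℝ)) (bound := fun _ => C)
    (μ := volume) (s := Metric.ball (0:ℝ) ε₀) (Metric.ball_mem_nhds 0 hε₀pos)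
    (Eventually.of_forall fun ε =>
      (((hIc ε).mono hsub).aestronglyMeasurable measurableSet_uIoc))
    ((hIc 0).intervalIntegrable_of_Icc zero_le_one)
    (((hG'1c 0 (by simpa using hε₀pos.le)).mono hsub).aestronglyMeasurable
      measurableSet_uIoc)
    (Eventually.of_forall fun t ht ε hε => by
      have hεle : |ε| ≤ ε₀ := by
        have := mem_ball_iff_norm.1 hε
        simpa [Real.norm_eq_abs] using this.le
      exact hC (ε, t) ⟨abs_le.1 hεle, hsub ht⟩)
    intervalIntegrable_const
    (Eventually.of_forall fun t ht ε hε => by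
      have hεle : |ε| ≤ ε₀ := by
        have := mem_ball_iff_norm.1 hε
        simpa [Real.norm_eq_abs] using this.le
      exact h_diff t (hsub ht) ε hεle)
  -- the integral of G' 0 vanishes via the Euler–Lagrange equation
  set h : ℝ → ℝ := fun t => F (r t) * ⟪‖r' t‖⁻¹ • r' t, δr t⟫ with hh
  have hderiv : ∀ t ∈ uIcc (0:ℝ) 1, HasDerivAt h (G' 0 t) t := by
    rw [uIcc_of_le zero_le_one]
    intro t ht
    have hn : ‖r' t‖ ≠ 0 := norm_ne_zero_iff.2 (hr'ne t ht)
    have hFt : HasDerivAt (fun u => F (r u)) ⟪gradF (r t), r' t⟫ t := by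
      have := (hgrad (r t)).hasFDerivAt.comp_hasDerivAt t (hr t ht)
      simpa [Function.comp_def] using this
    have hin : HasDerivAt (fun u => ⟪‖r' u‖⁻¹ • r' u, δr u⟫)
        (⟪‖r' t‖⁻¹ • r' t, δr' t⟫ + ⟪τ' t, δr t⟫) t :=
      (hτ' t ht).inner ℝ (hδr t ht)
    have hprod : HasDerivAt (fun u => F (r u) * ⟪‖r' u‖⁻¹ • r' u, δr u⟫)
        (⟪gradF (r t), r' t⟫ * ⟪‖r' t‖⁻¹ • r' t, δr t⟫ +
          F (r t) * (⟪‖r' t‖⁻¹ • r' t, δr' t⟫ + ⟪τ' t, δr t⟫)) t := hFt.mul hin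
    have key := congrArg (fun v : EuclideanSpace ℝ (Fin d) => ⟪v, δr t⟫) (hEL t ht)
    simp only [inner_add_left, real_inner_smul_left] at key
    convert hprod using 1
    simp only [hG', zero_smul, add_zero, real_inner_smul_left, div_eq_inv_mul]
    linarith [key]
  have hint : IntervalIntegrable (fun t => G' 0 t) volume 0 1 :=
    (hG'1c 0 (by simpa using hε₀pos.le)).intervalIntegrable_of_Icc zero_le_one
  have hzero : (∫ t in (0:ℝ)..1, G' 0 t) = 0 := by
    rw [intervalIntegral.integral_eq_sub_of_hasDerivAt hderiv hint]
    simp [hh, hδr0, hδr1]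
  rw [hzero] at main
  exact main
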